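/- A permutation avoids the generalized pattern 2-31 if and only if it avoids the classical pattern 2-3-1; that is, for π in S_n, there exist indices i < j < j+1 with π(j+1) < π(i) < π(j) if and only if there exist indices i < j < k with π(k) < π(i) < π(j). -/
import Mathlib

private lemma aux_2_31 (n : ℕ) (π : Equiv.Perm (Fin n)) :
    ∀ d : ℕ, ∀ i j k : Fin n, (k : ℕ) = (j : ℕ) + d → 0 < d → i < j →
      π k < π i → π i < π j →
      ∃ i' j' k' : Fin n, i' < j' ∧ (k' : ℕ) = (j' : ℕ) + 1 ∧ π k' < π i' ∧ π i' < π j' := by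
  intro d
  induction d with
  | zero => intro _ _ _ _ h; omega
  | succ d ih =>
    intro i j k hk _ hij hki hij2
    rcases Nat.eq_zero_or_pos d with hd | hd
    · subst hd
      exact ⟨i, j, k, hij, by omega, hki, hij2⟩
    · have hj1 : (j : ℕ) + 1 < n := by have := k.isLt; omega
      set j₁ : Fin n := ⟨(j : ℕ) + 1, hj1⟩ with hj₁
      rcases lt_trichotomy (π j₁) (π i) with h | h | h
      · exact ⟨i, j, j₁, hij, rfl, h, hij2⟩
      · exfalso
        have he : j₁ = i := π.injective h
        have h6 : (i : ℕ) = (j : ℕ) + 1 := by rw [← he]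
        have h7 : (i : ℕ) < (j : ℕ) := hij
        omega
      · have hij₁ : i < j₁ := lt_trans hij (by simp [Fin.lt_def, hj₁])
        exact ih i j₁ k (by show (k : ℕ) = (j : ℕ) + 1 + d; omega) hd hij₁ hki h

theorem pattern_2_31_iff_2_3_1 (n : ℕ) (π : Equiv.Perm (Fin n)) :
    (∃ i j k : Fin n, i < j ∧ (k : ℕ) = (j : ℕ) + 1 ∧ π k < π i ∧ π i < π j) ↔
      (∃ i j k : Fin n, i < j ∧ j < k ∧ π k < π i ∧ π i < π j) := by
  constructor
  · rintro ⟨i, j, k, h1, h2, h3, h4⟩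
    exact ⟨i, j, k, h1, by rw [Fin.lt_def]; omega, h3, h4⟩
  · rintro ⟨i, j, k, h1, h2, h3, h4⟩
    have hjk : (j : ℕ) < (k : ℕ) := h2
    exact aux_2_31 n π ((k : ℕ) - (j : ℕ)) i j k (by omega) (by omega) h1 h3 h4
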